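/- For every positive integer n, σ(n^2) = 2n+1. -/
import Mathlib


noncomputable def sigmaN (a : ℕ) : ℕ :=
  sInf {s : ℕ | 0 < s ∧ ∃ t : ℕ, 0 < t ∧ s^2 * a < t^2 ∧ t^2 < s^2 * (a+1)}

theorem stmt_14 (n : ℕ) (hn : 0 < n) : sigmaN (n^2) = 2*n + 1 := by
  unfold sigmaN
  have hmem : (2*n+1) ∈ {s : ℕ | 0 < s ∧ ∃ t : ℕ, 0 < t ∧ s^2 * n^2 < t^2 ∧ t^2 < s^2 * (n^2+1)} := by
    refine ⟨by omega, 2*n^2+n+1, by positivity, ?_, ?_⟩ <;> nlinarith [hn]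
  apply le_antisymm (Nat.sInf_le hmem)
  refine le_csInf ⟨_, hmem⟩ ?_
  rintro s ⟨hs, t, ht, h1, h2⟩
  -- t > s*n
  have htgt : s * n < t := by
    by_contra h
    push_neg at h
    nlinarith
  have : s^2*n^2 + 2*(s*n) + 1 ≤ t^2 := by nlinarith
  nlinarith
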